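/- Exactly 15 noncrossing perfect matchings of the set {1, 2, …, 12} contain no block of the form {2i−1, 2i} for any i ∈ {1, …, 6} (i.e., none of the blocks {1,2}, {3,4}, {5,6}, {7,8}, {9,10}, {11,12}). -/

import Mathlib

/-- A perfect matching of `{1,…,2n}`: a collection of pairwise disjoint
two-element blocks contained in `{1,…,2n}` covering every point. -/
def IsPerfectMatching (n : ℕ) (m : Finset (Finset ℕ)) : Prop :=
  (∀ b ∈ m, b.card = 2) ∧
  (∀ b ∈ m, b ⊆ Finset.Icc 1 (2 * n)) ∧
  (∀ b₁ ∈ m, ∀ b₂ ∈ m, b₁ ≠ b₂ → Disjoint b₁ b₂) ∧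
  (∀ i ∈ Finset.Icc 1 (2 * n), ∃ b ∈ m, i ∈ b)

/-- Two blocks `{a,b}` (`a<b`) and `{c,d}` (`c<d`) cross when `a<c<b<d`. -/
def Crosses (b₁ b₂ : Finset ℕ) : Prop :=
  ∃ a ∈ b₁, ∃ b ∈ b₁, ∃ c ∈ b₂, ∃ d ∈ b₂, a < c ∧ c < b ∧ b < d

/-- A matching is noncrossing if no two of its blocks cross. -/
def Noncrossing (m : Finset (Finset ℕ)) : Prop :=
  ∀ b₁ ∈ m, ∀ b₂ ∈ m, ¬ Crosses b₁ b₂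

instance (b₁ b₂ : Finset ℕ) : Decidable (Crosses b₁ b₂) := by
  unfold Crosses; infer_instance
instance (m : Finset (Finset ℕ)) : Decidable (Noncrossing m) := by
  unfold Noncrossing; infer_instance
instance (n m) : Decidable (IsPerfectMatching n m) := by
  unfold IsPerfectMatching; infer_instance

/-- Fuel-based enumeration of all perfect matchings of a list, as lists of pairs. -/
def enum2 : ℕ → List ℕ → List (List (ℕ × ℕ))
  | _, [] => [[]]
  | 0, _ :: _ => []
  | (f+1), x :: xs => xs.flatMap fun y => (enum2 f (xs.erase y)).map ((x,y) :: ·)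

def pred2 (P : List (ℕ × ℕ)) : Bool :=
  decide ((∀ p ∈ P, ∀ q ∈ P, ¬(p.1 < q.1 ∧ q.1 < p.2 ∧ p.2 < q.2)) ∧
    ∀ p ∈ P, ¬(p.1 % 2 = 1 ∧ p.2 = p.1 + 1))

def finsetOf (P : List (ℕ × ℕ)) : Finset (Finset ℕ) :=
  P.foldr (fun p s => insert {p.1, p.2} s) ∅

def L12 : List ℕ := List.range' 1 12

def P15 : List (List (ℕ × ℕ)) :=
 [[(1, 4), (2, 3), (5, 8), (6, 7), (9, 12), (10, 11)],
  [(1, 4), (2, 3), (5, 12), (6, 7), (8, 9), (10, 11)],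
  [(1, 4), (2, 3), (5, 12), (6, 11), (7, 10), (8, 9)],
  [(1, 6), (2, 3), (4, 5), (7, 12), (8, 9), (10, 11)],
  [(1, 8), (2, 3), (4, 5), (6, 7), (9, 12), (10, 11)],
  [(1, 8), (2, 7), (3, 6), (4, 5), (9, 12), (10, 11)],
  [(1, 12), (2, 3), (4, 5), (6, 7), (8, 9), (10, 11)],
  [(1, 12), (2, 3), (4, 5), (6, 11), (7, 10), (8, 9)],
  [(1, 12), (2, 3), (4, 9), (5, 8), (6, 7), (10, 11)],
  [(1, 12), (2, 3), (4, 11), (5, 10), (6, 7), (8, 9)],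
  [(1, 12), (2, 7), (3, 6), (4, 5), (8, 9), (10, 11)],
  [(1, 12), (2, 9), (3, 8), (4, 5), (6, 7), (10, 11)],
  [(1, 12), (2, 11), (3, 6), (4, 5), (7, 10), (8, 9)],
  [(1, 12), (2, 11), (3, 10), (4, 5), (6, 7), (8, 9)],
  [(1, 12), (2, 11), (3, 10), (4, 9), (5, 8), (6, 7)]]

lemma mem_finsetOf {p : ℕ × ℕ} {P : List (ℕ × ℕ)} (h : p ∈ P) :
    ({p.1, p.2} : Finset ℕ) ∈ finsetOf P := by
  induction P with
  | nil => simp at h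
  | cons q Q ih =>
    rcases List.mem_cons.mp h with h | h
    · subst h; simp [finsetOf]
    · simp only [finsetOf, List.foldr_cons, Finset.mem_insert]
      exact Or.inr (ih h)

/-- Completeness: every perfect matching of `l` arises from `enum2`. -/
lemma enum2_complete : ∀ (fuel : ℕ) (l : List ℕ), l.length ≤ fuel → l.Nodup →
    ∀ (m : Finset (Finset ℕ)),
    (∀ b ∈ m, b.card = 2) →
    (∀ b ∈ m, ∀ z ∈ b, z ∈ l) →
    (∀ b₁ ∈ m, ∀ b₂ ∈ m, b₁ ≠ b₂ → Disjoint b₁ b₂) →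
    (∀ i ∈ l, ∃ b ∈ m, i ∈ b) →
    ∃ P ∈ enum2 fuel l, m = finsetOf P := by
  intro fuel
  induction fuel with
  | zero =>
    intro l hl _ m h2 hsub _ _
    match l, hl with
    | [], _ =>
      refine ⟨[], by simp [enum2], ?_⟩
      ext b
      simp only [finsetOf, List.foldr_nil, Finset.notMem_empty, iff_false]
      intro hb
      obtain ⟨z, hz⟩ := Finset.card_pos.mp (by rw [h2 b hb]; norm_num)
      exact absurd (hsub b hb z hz) (by simp)
  | succ f ih =>
    intro l hl hn m h2 hsub hdisj hcov
    match l with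
    | [] =>
      refine ⟨[], by simp [enum2], ?_⟩
      ext b
      simp only [finsetOf, List.foldr_nil, Finset.notMem_empty, iff_false]
      intro hb
      obtain ⟨z, hz⟩ := Finset.card_pos.mp (by rw [h2 b hb]; norm_num)
      exact absurd (hsub b hb z hz) (by simp)
    | x :: xs =>
      obtain ⟨b, hb, hxb⟩ := hcov x List.mem_cons_self
      -- b = {x, y} with y ≠ x
      obtain ⟨y, hyx, hbxy⟩ : ∃ y, y ≠ x ∧ b = {x, y} := by
        obtain ⟨u, v, huv, hbuv⟩ := Finset.card_eq_two.mp (h2 b hb)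
        subst hbuv
        rcases Finset.mem_insert.mp hxb with h | h
        · subst h
          exact ⟨v, fun hh => huv hh.symm, rfl⟩
        · rw [Finset.mem_singleton] at h
          subst h
          exact ⟨u, fun hh => huv hh, Finset.pair_comm u x⟩
      subst hbxy
      have hxnotxs : x ∉ xs := (List.nodup_cons.mp hn).1
      have hnxs : xs.Nodup := (List.nodup_cons.mp hn).2
      have hyxs : y ∈ xs := by
        have := hsub _ hb y (by simp)
        rcases List.mem_cons.mp this with h | h
        · exact absurd h hyx
        · exact h
      set m' := m.erase {x, y} with hm'
      have hne : ∀ b' ∈ m', b' ≠ {x, y} := fun b' hb' => Finset.ne_of_mem_erase hb'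
      have hmem : ∀ b' ∈ m', b' ∈ m := fun b' hb' => Finset.mem_of_mem_erase hb'
      have hd : ∀ b' ∈ m', Disjoint b' {x, y} :=
        fun b' hb' => hdisj b' (hmem b' hb') _ hb (hne b' hb')
      have hsub' : ∀ b' ∈ m', ∀ z ∈ b', z ∈ xs.erase y := by
        intro b' hb' z hz
        have hzx : z ≠ x := by
          intro h; subst h
          exact (Finset.disjoint_left.mp (hd b' hb') hz) (by simp)
        have hzy : z ≠ y := by
          intro h; subst h
          exact (Finset.disjoint_left.mp (hd b' hb') hz) (by simp)
        have hzl := hsub b' (hmem b' hb') z hz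
        rcases List.mem_cons.mp hzl with h | h
        · exact absurd h hzx
        · exact (List.mem_erase_of_ne hzy).mpr h
      have hcov' : ∀ i ∈ xs.erase y, ∃ b' ∈ m', i ∈ b' := by
        intro i hi
        have hiy : i ≠ y := (hnxs.mem_erase_iff.mp hi).1
        have hixs : i ∈ xs := (hnxs.mem_erase_iff.mp hi).2
        have hix : i ≠ x := fun h => hxnotxs (h ▸ hixs)
        obtain ⟨b'', hb'', hib''⟩ := hcov i (List.mem_cons.mpr (Or.inr hixs))
        refine ⟨b'', Finset.mem_erase.mpr ⟨?_, hb''⟩, hib''⟩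
        intro h; subst h
        rcases Finset.mem_insert.mp hib'' with h | h
        · exact hix h
        · exact hiy (Finset.mem_singleton.mp h)
      have hlen : (xs.erase y).length ≤ f :=
        le_trans List.length_erase_le (Nat.le_of_succ_le_succ hl)
      obtain ⟨P', hP', hmP'⟩ := ih (xs.erase y) hlen (hnxs.erase y) m'
        (fun b' hb' => h2 b' (hmem b' hb')) hsub'
        (fun b₁ h₁ b₂ h₂ => hdisj b₁ (hmem b₁ h₁) b₂ (hmem b₂ h₂)) hcov'
      refine ⟨(x, y) :: P', ?_, ?_⟩
      · simp only [enum2, List.mem_flatMap]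
        exact ⟨y, hyxs, List.mem_map.mpr ⟨P', hP', rfl⟩⟩
      · have : finsetOf ((x, y) :: P') = insert {x, y} (finsetOf P') := rfl
        rw [this, ← hmP', hm', Finset.insert_erase hb]

lemma mem_L12 {z : ℕ} : z ∈ L12 ↔ z ∈ Finset.Icc 1 12 := by
  simp [L12, List.mem_range'_1, Finset.mem_Icc]
  omega

set_option maxRecDepth 100000 in
set_option maxHeartbeats 4000000 in
lemma filter_eq : (enum2 12 L12).filter pred2 = P15 := by decide

/-- Exactly 15 noncrossing perfect matchings of `{1,…,12}` contain no block of
the form `{2i−1, 2i}` for `i ∈ {1,…,6}`. -/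
theorem card_noncrossing_matchings_without_adjacent_odd_even_blocks :
    {m : Finset (Finset ℕ) | IsPerfectMatching 6 m ∧ Noncrossing m ∧
      ∀ i ∈ Finset.Icc 1 6, ({2 * i - 1, 2 * i} : Finset ℕ) ∉ m}.ncard = 15 := by
  have hset : {m : Finset (Finset ℕ) | IsPerfectMatching 6 m ∧ Noncrossing m ∧
      ∀ i ∈ Finset.Icc 1 6, ({2 * i - 1, 2 * i} : Finset ℕ) ∉ m}
      = ↑((P15.map finsetOf).toFinset) := by
    ext m
    simp only [Set.mem_setOf_eq, Finset.coe_sort_coe, Finset.mem_coe,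
      List.mem_toFinset, List.mem_map]
    constructor
    · rintro ⟨⟨h2, hsub, hdisj, hcov⟩, hnc, hadj⟩
      obtain ⟨P, hP, rfl⟩ := enum2_complete 12 L12 (by decide) (by decide) m h2
        (fun b hb z hz => mem_L12.mpr (hsub b hb hz)) hdisj
        (fun i hi => hcov i (mem_L12.mp hi))
      have hpred : pred2 P = true := by
        refine decide_eq_true ⟨?_, ?_⟩
        · rintro p hp q hq ⟨h1, h2', h3⟩
          exact hnc _ (mem_finsetOf hp) _ (mem_finsetOf hq)
            ⟨p.1, by simp, p.2, by simp, q.1, by simp, q.2, by simp, h1, h2', h3⟩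
        · rintro p hp ⟨hodd, hsucc⟩
          have hbm := mem_finsetOf hp
          have h1 : p.1 ∈ Finset.Icc 1 12 := hsub _ hbm (by simp)
          have h2'' : p.2 ∈ Finset.Icc 1 12 := hsub _ hbm (by simp)
          simp only [Finset.mem_Icc] at h1 h2''
          set i := (p.1 + 1) / 2 with hi
          have hp1 : p.1 = 2 * i - 1 := by omega
          have hp2 : p.2 = 2 * i := by omega
          have hii : i ∈ Finset.Icc 1 6 := by simp only [Finset.mem_Icc]; omega
          exact hadj i hii (by rw [← hp1, ← hp2]; exact hbm)
      have : P ∈ P15 := by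
        rw [← filter_eq]
        exact List.mem_filter.mpr ⟨hP, hpred⟩
      exact ⟨P, this, rfl⟩
    · rintro ⟨P, hP, rfl⟩
      revert P
      decide
  rw [hset, Set.ncard_coe_finset]
  decide
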